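/- Let A be a countable partially ordered set and L an algebraic lattice whose set of compact elements is countable (an ω-algebraic lattice). Then the set of compact elements of the complete lattice of monotone functions from A to L, ordered pointwise, is countable; that is, this function lattice is again ω-algebraic. -/

import Mathlib

/-- An element `c` of a complete lattice is *compact* if whenever `c ≤ sSup S`
there is a finite subset `S' ⊆ S` with `c ≤ sSup S'`. -/
def IsCpt {L : Type*} [CompleteLattice L] (c : L) : Prop :=
  ∀ S : Set L, c ≤ sSup S → ∃ S' ⊆ S, S'.Finite ∧ c ≤ sSup S'

/-- A complete lattice is *algebraic* if every element is the least upper bound of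
some set of compact elements. -/
def IsAlgebraicLattice (L : Type*) [CompleteLattice L] : Prop :=
  ∀ x : L, ∃ B : Set L, (∀ b ∈ B, IsCpt b) ∧ x = sSup B

open Classical in
/-- The step function `a ↘ c : A → L`, sending `x` to `c` if `a ≤ x` and to `⊥` otherwise.
It is monotone, hence an element of the complete lattice `A →o L`. -/
noncomputable def step {A L : Type*} [PartialOrder A] [CompleteLattice L] (a : A) (c : L) :
    A →o L :=
  ⟨fun x => if a ≤ x then c else ⊥, by
    intro x y hxy
    dsimp only
    split_ifs with h1 h2
    · exact le_refl c
    · exact absurd (h1.trans hxy) h2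
    · exact bot_le
    · exact le_rfl⟩

/-- For a countable poset `A` and an ω-algebraic lattice `L` (algebraic with
countably many compact elements), the set of compact elements of the complete lattice
`A →o L` of monotone functions ordered pointwise is countable. -/
theorem monotone_lattice_omega_algebraic {A L : Type*} [PartialOrder A] [CompleteLattice L]
    [Countable A] (halg : IsAlgebraicLattice L)
    (hcnt : {c : L | IsCpt c}.Countable) :
    {g : A →o L | IsCpt g}.Countable := by
  classical
  set St : Set (A →o L) := (fun p : A × L => step p.1 p.2) '' (Set.univ ×ˢ {c | IsCpt c})
    with hSt
  have hStc : St.Countable := (Set.countable_univ.prod hcnt).image _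
  have hTc : (sSup '' {s : Set (A →o L) | s.Finite ∧ s ⊆ St}).Countable :=
    (Set.countable_setOf_finite_subset hStc).image _
  refine hTc.mono ?_
  intro g hg
  -- S : steps below g
  set S : Set (A →o L) := {f ∈ St | f ≤ g} with hS
  have hle : g ≤ sSup S := by
    intro x
    show g x ≤ sSup S x
    obtain ⟨B, hB, hBx⟩ := halg (g x)
    rw [OrderHom.sSup_apply]
    calc g x = sSup B := hBx
      _ ≤ _ := by
        apply sSup_le
        intro c hc
        have hstep : step x c ∈ S := by
          constructor
          · exact ⟨(x, c), ⟨Set.mem_univ _, hB c hc⟩, rfl⟩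
          · intro y
            show (if x ≤ y then c else ⊥) ≤ g y
            split_ifs with h
            · exact le_trans (hBx ▸ le_sSup hc) (g.mono h)
            · exact bot_le
        calc c = step x c x := by show c = if x ≤ x then c else ⊥; simp
          _ ≤ ⨆ f ∈ S, f x := le_biSup (fun f : A →o L => f x) hstep
  obtain ⟨S', hS'S, hfin, hgle⟩ := hg S hle
  refine ⟨S', ⟨hfin, fun f hf => (hS'S hf).1⟩, ?_⟩
  exact le_antisymm (sSup_le fun f hf => (hS'S hf).2) hgle
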